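/- If |λ| = 1 and X is a d×d complex matrix with Φ(X) = λ·X, then the Hilbert–Schmidt adjoint map Φ† applied to X gives Φ†(X) = conj(λ)·X; explicitly, Σ_{i=1}^m p_i · U_i† X U_i = conj(λ)·X. -/

import Mathlib

open Matrix BigOperators

theorem stmt_11 {d m : ℕ} (hd : 1 ≤ d)
    (U : Fin m → Matrix (Fin d) (Fin d) ℂ)
    (hU : ∀ i, U i ∈ Matrix.unitaryGroup (Fin d) ℂ)
    (p : Fin m → ℝ) (hp : ∀ i, 0 < p i) (hpsum : ∑ i, p i = 1)
    (Φ : Matrix (Fin d) (Fin d) ℂ → Matrix (Fin d) (Fin d) ℂ)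
    (hΦ : ∀ ρ, Φ ρ = ∑ i, (p i : ℂ) • (U i * ρ * (U i)ᴴ))
    (lam : ℂ) (hlam : ‖lam‖ = 1)
    (X : Matrix (Fin d) (Fin d) ℂ) (hX : Φ X = lam • X) :
    ∑ i, (p i : ℂ) • ((U i)ᴴ * X * U i) = (starRingEnd ℂ) lam • X := by
  classical
  set A : Fin m → Matrix (Fin d) (Fin d) ℂ := fun i => U i * X * (U i)ᴴ with hA
  set D : Fin m → Matrix (Fin d) (Fin d) ℂ := fun i => A i - lam • X with hD
  have hXsum : ∑ i, (p i : ℂ) • A i = lam • X := by rw [← hΦ]; exact hX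
  have hUU : ∀ i, (U i)ᴴ * U i = 1 := fun i => by
    simpa [Matrix.star_eq_conjTranspose] using Matrix.mem_unitaryGroup_iff'.mp (hU i)
  have hUU' : ∀ i, U i * (U i)ᴴ = 1 := fun i => by
    simpa [Matrix.star_eq_conjTranspose] using Matrix.mem_unitaryGroup_iff.mp (hU i)
  have hll : (starRingEnd ℂ) lam * lam = 1 := by
    rw [← Complex.normSq_eq_conj_mul_self]
    rw [Complex.normSq_eq_norm_sq, hlam]
    norm_num
  set t : ℂ := (Xᴴ * X).trace with ht
  -- trace of (A i)ᴴ * A i equals t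
  have htrA : ∀ i, ((A i)ᴴ * A i).trace = t := by
    intro i
    have : (A i)ᴴ * A i = U i * (Xᴴ * X) * (U i)ᴴ := by
      simp only [hA, Matrix.conjTranspose_mul, Matrix.conjTranspose_conjTranspose]
      have e : Xᴴ * ((U i)ᴴ * (U i * (X * (U i)ᴴ))) = Xᴴ * (X * (U i)ᴴ) := by
        rw [← Matrix.mul_assoc ((U i)ᴴ) (U i), hUU i, Matrix.one_mul]
      simp only [Matrix.mul_assoc]
      rw [e]
    rw [this, Matrix.trace_mul_cycle, ← Matrix.mul_assoc, hUU i, Matrix.one_mul]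
  -- sum of conjTransposes
  have hAconj : ∑ i, (p i : ℂ) • (A i)ᴴ = (starRingEnd ℂ) lam • Xᴴ := by
    have := congrArg Matrix.conjTranspose hXsum
    simpa [Matrix.conjTranspose_sum, Matrix.conjTranspose_smul, Complex.star_def,
      Complex.conj_ofReal] using this
  -- cross term sums
  have hcross1 : ∑ i, (p i : ℂ) * ((A i)ᴴ * X).trace = (starRingEnd ℂ) lam * t := by
    have : ((∑ i, (p i : ℂ) • (A i)ᴴ) * X).trace = ∑ i, (p i : ℂ) * ((A i)ᴴ * X).trace := by
      simp [Matrix.sum_mul, Matrix.smul_mul, Matrix.trace_smul, smul_eq_mul]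
    rw [← this, hAconj, Matrix.smul_mul, Matrix.trace_smul, smul_eq_mul]
  have hcross2 : ∑ i, (p i : ℂ) * (Xᴴ * A i).trace = lam * t := by
    have : (Xᴴ * (∑ i, (p i : ℂ) • A i)).trace = ∑ i, (p i : ℂ) * (Xᴴ * A i).trace := by
      simp [Matrix.mul_sum, Matrix.mul_smul, Matrix.trace_smul, smul_eq_mul]
    rw [← this, hXsum, Matrix.mul_smul, Matrix.trace_smul, smul_eq_mul]
  have hpc : ∑ i, (p i : ℂ) = 1 := by
    rw [← Complex.ofReal_sum, hpsum, Complex.ofReal_one]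
  -- expansion of each trace
  have expand : ∀ i, ((D i)ᴴ * D i).trace
      = ((A i)ᴴ * A i).trace - (starRingEnd ℂ) lam * (Xᴴ * A i).trace
        - lam * ((A i)ᴴ * X).trace + ((starRingEnd ℂ) lam * lam) * t := by
    intro i
    simp only [hD, Matrix.conjTranspose_sub, Matrix.conjTranspose_smul, Matrix.sub_mul,
      Matrix.mul_sub, Matrix.smul_mul, Matrix.mul_smul, Matrix.trace_sub, Matrix.trace_smul,
      smul_smul, smul_eq_mul, Complex.star_def, ht]
    ring
  -- the key: sum of p i * trace((D i)ᴴ * D i) = 0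
  have key : ∑ i, (p i : ℂ) * ((D i)ᴴ * D i).trace = 0 := by
    have : ∑ i, (p i : ℂ) * ((D i)ᴴ * D i).trace
        = (∑ i, (p i : ℂ)) * t - (starRingEnd ℂ) lam * (∑ i, (p i : ℂ) * (Xᴴ * A i).trace)
          - lam * (∑ i, (p i : ℂ) * ((A i)ᴴ * X).trace)
          + (∑ i, (p i : ℂ)) * (((starRingEnd ℂ) lam * lam) * t) := by
      rw [Finset.sum_mul, Finset.sum_mul, Finset.mul_sum, Finset.mul_sum,
        ← Finset.sum_sub_distrib, ← Finset.sum_sub_distrib, ← Finset.sum_add_distrib]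
      refine Finset.sum_congr rfl fun i _ => ?_
      rw [expand i, htrA i]; ring
    rw [this, hpc, hcross1, hcross2]
    linear_combination (-t) * hll
  -- trace as sum of normSq
  have htr_normSq : ∀ (M : Matrix (Fin d) (Fin d) ℂ),
      (Mᴴ * M).trace = ((∑ j, ∑ k, Complex.normSq (M k j) : ℝ) : ℂ) := by
    intro M
    simp [Matrix.trace, Matrix.diag, Matrix.mul_apply, Matrix.conjTranspose_apply,
      Complex.normSq_eq_conj_mul_self]
  set g : Fin m → ℝ := fun i => ∑ j, ∑ k, Complex.normSq (D i k j) with hg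
  have hgsum : ∑ i, p i * g i = 0 := by
    have : ((∑ i, p i * g i : ℝ) : ℂ) = 0 := by
      push_cast
      rw [← key]
      refine Finset.sum_congr rfl fun i _ => ?_
      rw [htr_normSq (D i)]
    exact_mod_cast this
  have hgnonneg : ∀ i, 0 ≤ g i := fun i =>
    Finset.sum_nonneg fun j _ => Finset.sum_nonneg fun k _ => Complex.normSq_nonneg _
  have hDzero : ∀ i, D i = 0 := by
    intro i
    have hterm : p i * g i = 0 := by
      have := (Finset.sum_eq_zero_iff_of_nonneg (fun j _ =>
        mul_nonneg (hp j).le (hgnonneg j))).mp hgsum i (Finset.mem_univ i)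
      exact this
    have hgi : g i = 0 := by
      rcases mul_eq_zero.mp hterm with h | h
      · exact absurd h (hp i).ne'
      · exact h
    ext k j
    have h1 : ∀ j' ∈ Finset.univ, (0:ℝ) ≤ ∑ k', Complex.normSq (D i k' j') := fun j' _ =>
      Finset.sum_nonneg fun k' _ => Complex.normSq_nonneg _
    have h2 := (Finset.sum_eq_zero_iff_of_nonneg h1).mp hgi j (Finset.mem_univ j)
    have h3 := (Finset.sum_eq_zero_iff_of_nonneg (fun k' _ =>
      Complex.normSq_nonneg (D i k' j))).mp h2 k (Finset.mem_univ k)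
    simpa using Complex.normSq_eq_zero.mp h3
  -- deduce U iᴴ * X * U i = conj lam • X
  have hfix : ∀ i, (U i)ᴴ * X * U i = (starRingEnd ℂ) lam • X := by
    intro i
    have hAi : A i = lam • X := by
      have := hDzero i
      rw [hD] at this
      exact sub_eq_zero.mp this
    have h1 : (U i)ᴴ * A i * U i = X := by
      simp only [hA]
      calc (U i)ᴴ * (U i * X * (U i)ᴴ) * U i
          = ((U i)ᴴ * U i) * X * ((U i)ᴴ * U i) := by simp only [Matrix.mul_assoc]
        _ = X := by rw [hUU i]; simp
    have h2 : (U i)ᴴ * A i * U i = lam • ((U i)ᴴ * X * U i) := by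
      rw [hAi, Matrix.mul_smul, Matrix.smul_mul]
    have h3 : lam • ((U i)ᴴ * X * U i) = X := by rw [← h2, h1]
    calc (U i)ᴴ * X * U i = ((starRingEnd ℂ) lam * lam) • ((U i)ᴴ * X * U i) := by
          rw [hll, one_smul]
      _ = (starRingEnd ℂ) lam • (lam • ((U i)ᴴ * X * U i)) := by rw [smul_smul]
      _ = (starRingEnd ℂ) lam • X := by rw [h3]
  calc ∑ i, (p i : ℂ) • ((U i)ᴴ * X * U i)
      = ∑ i, (p i : ℂ) • ((starRingEnd ℂ) lam • X) := by
        refine Finset.sum_congr rfl fun i _ => by rw [hfix i]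
    _ = (∑ i, (p i : ℂ)) • ((starRingEnd ℂ) lam • X) := by rw [Finset.sum_smul]
    _ = (starRingEnd ℂ) lam • X := by rw [hpc, one_smul]
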